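/- Let G be a connected (q+1)-regular graph on n vertices with adjacency matrix A, and let N_m be the number of reduced (non-backtracking, tail-free) closed paths of length m in G. Then N_m = 2q^{m/2}·∑_{λ ∈ Spec(A)} T_m(λ/(2√q)) + n·e_m·(q−1), where the sum is over eigenvalues with multiplicity, T_m is the Chebyshev polynomial of the first kind, and e_m = 1 if m is even, 0 otherwise. -/

import Mathlib

open Polynomial Polynomial.Chebyshev Matrix Finset

/-- scalar analogue of the matrix sequence `B`. -/
noncomputable def sbAux (q x : ℝ) : ℕ → ℝ
  | 0 => 1
  | 1 => x
  | 2 => x ^ 2 - (q + 1)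
  | (m + 3) => x * sbAux q x (m + 2) - q * sbAux q x (m + 1)

/-- scalar Chebyshev sequence. -/
noncomputable def gbAux (q x : ℝ) (m : ℕ) : ℝ :=
  2 * (Real.sqrt q) ^ m * (Chebyshev.T ℝ (m : ℤ)).eval (x / (2 * Real.sqrt q))

/-- partial sums. -/
noncomputable def DbAux (q x : ℝ) (m : ℕ) : ℝ :=
  (∑ k ∈ Finset.Icc 1 ((m - 1) / 2), sbAux q x (m - 2 * k)) +
    (if Even m then (1 : ℝ) else 0)

lemma gbAux_zero (q x : ℝ) : gbAux q x 0 = 2 := by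
  simp [gbAux, Polynomial.Chebyshev.T_zero]

lemma gbAux_one (q x : ℝ) (hs : Real.sqrt q ≠ 0) : gbAux q x 1 = x := by
  simp only [gbAux, Nat.cast_one, Polynomial.Chebyshev.T_one, Polynomial.eval_X, pow_one]
  field_simp

lemma gbAux_rec (q x : ℝ) (hs : Real.sqrt q ≠ 0) (hsq : Real.sqrt q ^ 2 = q) (m : ℕ) :
    gbAux q x (m + 2) = x * gbAux q x (m + 1) - q * gbAux q x m := by
  have hT : Chebyshev.T ℝ ((m : ℤ) + 2) = 2 * X * Chebyshev.T ℝ ((m : ℤ) + 1) - Chebyshev.T ℝ (m : ℤ) :=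
    Polynomial.Chebyshev.T_add_two ℝ (m : ℤ)
  simp only [gbAux]
  push_cast
  rw [hT]
  simp only [Polynomial.eval_sub, Polynomial.eval_mul, Polynomial.eval_ofNat, Polynomial.eval_X]
  rw [← hsq]
  field_simp
  rw [Real.sqrt_sq (Real.sqrt_nonneg q)]
  ring

lemma DbAux_one (q x : ℝ) : DbAux q x 1 = 0 := by
  simp [DbAux, Nat.even_iff]

lemma DbAux_two (q x : ℝ) : DbAux q x 2 = 1 := by
  simp [DbAux]

lemma DbAux_rec (q x : ℝ) (m : ℕ) (hm : 1 ≤ m) :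
    DbAux q x (m + 2) = DbAux q x m + sbAux q x m := by
  unfold DbAux
  have hN : (m + 2 - 1) / 2 = (m - 1) / 2 + 1 := by omega
  have hpar : (if Even (m + 2) then (1 : ℝ) else 0) = (if Even m then (1 : ℝ) else 0) := by
    simp [Nat.even_add]
  rw [hN, hpar]
  have h1 : ∑ k ∈ Finset.Icc 1 ((m - 1) / 2 + 1), sbAux q x (m + 2 - 2 * k)
      = sbAux q x m + ∑ k ∈ Finset.Icc 1 ((m - 1) / 2), sbAux q x (m - 2 * k) := by
    rw [← Finset.Ico_add_one_right_eq_Icc, ← Finset.Ico_add_one_right_eq_Icc, Finset.sum_Ico_eq_sum_range,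
      Finset.sum_Ico_eq_sum_range]
    have e1 : (m - 1) / 2 + 1 + 1 - 1 = (m - 1) / 2 + 1 := by omega
    have e2 : (m - 1) / 2 + 1 - 1 = (m - 1) / 2 := by omega
    rw [e1, e2, Finset.sum_range_succ']
    have : ∀ i, sbAux q x (m + 2 - 2 * (1 + (i + 1))) = sbAux q x (m - 2 * (1 + i)) := by
      intro i; congr 1; omega
    simp only [this]
    have : m + 2 - 2 * (1 + 0) = m := by omega
    rw [this, add_comm]
  rw [h1]; ring

lemma sbAux_E (q x : ℝ) : ∀ m : ℕ,
    (sbAux q x (m + 1) = x * DbAux q x (m + 2) - (q + 1) * DbAux q x (m + 1)) ∧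
    (sbAux q x (m + 2) = x * DbAux q x (m + 3) - (q + 1) * DbAux q x (m + 2)) := by
  intro m
  induction m with
  | zero =>
    constructor
    · show sbAux q x 1 = _
      rw [DbAux_two, DbAux_one]
      simp [sbAux]
    · show sbAux q x 2 = _
      rw [show (3 : ℕ) = 1 + 2 from rfl, DbAux_rec q x 1 le_rfl, DbAux_one, DbAux_two]
      show x ^ 2 - (q + 1) = x * (0 + sbAux q x 1) - (q + 1) * 1
      show x ^ 2 - (q + 1) = x * (0 + x) - (q + 1) * 1
      ring
  | succ k ih =>
    refine ⟨ih.2, ?_⟩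
    have h3 : DbAux q x (k + 1 + 3) = DbAux q x (k + 2) + sbAux q x (k + 2) := by
      exact DbAux_rec q x (k + 2) (by omega)
    have h2 : DbAux q x (k + 1 + 2) = DbAux q x (k + 1) + sbAux q x (k + 1) :=
      DbAux_rec q x (k + 1) (by omega)
    have hrec : sbAux q x (k + 3) = x * sbAux q x (k + 2) - q * sbAux q x (k + 1) := rfl
    show sbAux q x (k + 3) = x * DbAux q x (k + 1 + 3) - (q + 1) * DbAux q x (k + 1 + 2)
    rw [hrec, h3, h2]
    have h1 := ih.1
    linear_combination h1

lemma sbAux_C (q x : ℝ) (hs : Real.sqrt q ≠ 0) (hsq : Real.sqrt q ^ 2 = q) : ∀ m : ℕ,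
    (sbAux q x (m + 1) - gbAux q x (m + 1) = (q - 1) * DbAux q x (m + 1)) ∧
    (sbAux q x (m + 2) - gbAux q x (m + 2) = (q - 1) * DbAux q x (m + 2)) := by
  intro m
  induction m with
  | zero =>
    constructor
    · rw [gbAux_one q x hs, DbAux_one]
      show x - x = (q - 1) * 0
      ring
    · rw [gbAux_rec q x hs hsq 0, gbAux_one q x hs, gbAux_zero, DbAux_two]
      show x ^ 2 - (q + 1) - (x * x - q * 2) = (q - 1) * 1
      ring
  | succ k ih =>
    refine ⟨ih.2, ?_⟩
    have hrec : sbAux q x (k + 3) = x * sbAux q x (k + 2) - q * sbAux q x (k + 1) := rfl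
    have hg := gbAux_rec q x hs hsq (k + 1)
    have hD : DbAux q x (k + 3) = DbAux q x (k + 1) + sbAux q x (k + 1) :=
      DbAux_rec q x (k + 1) (by omega)
    have hE := (sbAux_E q x k).1
    show sbAux q x (k + 3) - gbAux q x (k + 3) = (q - 1) * DbAux q x (k + 3)
    rw [hrec, show k + 1 + 2 = k + 3 from rfl] at *
    rw [hg, hD]
    linear_combination x * ih.2 - q * ih.1 - (q - 1) * hE

lemma sbAux_key (q x : ℝ) (hq1 : (1 : ℝ) ≤ q) (m : ℕ) (hm : 1 ≤ m) :
    sbAux q x m - (q - 1) * ∑ k ∈ Finset.Icc 1 ((m - 1) / 2), sbAux q x (m - 2 * k)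
      = gbAux q x m + (if Even m then (1 : ℝ) else 0) * (q - 1) := by
  have hq0 : (0 : ℝ) < q := lt_of_lt_of_le one_pos hq1
  have hs : Real.sqrt q ≠ 0 := by positivity
  have hsq : Real.sqrt q ^ 2 = q := Real.sq_sqrt hq0.le
  obtain ⟨m, rfl⟩ : ∃ k, m = k + 1 := ⟨m - 1, by omega⟩
  have hC := (sbAux_C q x hs hsq m).1
  have : DbAux q x (m + 1) = (∑ k ∈ Finset.Icc 1 ((m + 1 - 1) / 2), sbAux q x (m + 1 - 2 * k)) +
      (if Even (m + 1) then (1 : ℝ) else 0) := rfl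
  rw [this] at hC
  linear_combination hC

lemma sbAux_key' (q x : ℝ) (hq1 : (1 : ℝ) ≤ q) (m : ℕ) (hm : 1 ≤ m) :
    sbAux q x m - (q - 1) * ∑ k ∈ Finset.Icc 1 ((m - 1) / 2), sbAux q x (m - 2 * k)
      = 2 * (Real.sqrt q) ^ m * (Chebyshev.T ℝ (m : ℤ)).eval (x / (2 * Real.sqrt q))
        + (if Even m then (1 : ℝ) else 0) * (q - 1) :=
  sbAux_key q x hq1 m hm

/-- For a connected `(q+1)`-regular graph `G` on `n` vertices, the number `N m` of
reduced (non-backtracking, tail-free) closed paths of length `m` — which equals the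
trace of `M m = A_m - (q-1) ∑_{k=1}^{⌊(m-1)/2⌋} A_{m-2k}` — satisfies
`N m = 2 q^{m/2} ∑_{λ ∈ Spec(A)} T_m(λ/(2√q)) + n e_m (q-1)`, the sum being over the
eigenvalues of the adjacency matrix counted with multiplicity. -/
theorem card_reducedCycles_eq_chebyshevT_sum
    {n : ℕ} (G : SimpleGraph (Fin n)) [DecidableRel G.Adj]
    (q : ℕ) (hq : 1 ≤ q) (hGconn : G.Connected) (hreg : G.IsRegularOfDegree (q + 1))
    (hHerm : (G.adjMatrix ℝ).IsHermitian)
    (B : ℕ → Matrix (Fin n) (Fin n) ℝ)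
    (hB0 : B 0 = 1) (hB1 : B 1 = G.adjMatrix ℝ)
    (hB2 : B 2 = (G.adjMatrix ℝ) ^ 2 - (q + 1 : ℝ) • 1)
    (hBrec : ∀ m, 3 ≤ m → B m = B (m - 1) * G.adjMatrix ℝ - (q : ℝ) • B (m - 2))
    (N : ℕ → ℕ)
    (hN : ∀ m, (N m : ℝ) =
      (B m - (q - 1 : ℝ) • ∑ k ∈ Finset.Icc 1 ((m - 1) / 2), B (m - 2 * k)).trace) :
    ∀ m : ℕ, 1 ≤ m → (N m : ℝ) =
      2 * (Real.sqrt q) ^ m *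
        ∑ i : Fin n, (Chebyshev.T ℝ (m : ℤ)).eval (hHerm.eigenvalues i / (2 * Real.sqrt q))
      + n * (if Even m then (1 : ℝ) else 0) * (q - 1) := by
  set A := G.adjMatrix ℝ with hA
  set U : Matrix (Fin n) (Fin n) ℝ := (hHerm.eigenvectorUnitary : Matrix (Fin n) (Fin n) ℝ) with hUdef
  set lam := hHerm.eigenvalues with hlam
  have hU1 : star U * U = 1 := Matrix.UnitaryGroup.star_mul_self _
  have hU2 : U * star U = 1 :=
    (Matrix.mem_unitaryGroup_iff).mp (hHerm.eigenvectorUnitary).2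
  have hspec : A = U * diagonal lam * star U := by
    have := hHerm.spectral_theorem
    simpa [RCLike.ofReal_real_eq_id] using this
  have conjA : star U * A * U = diagonal lam := by
    rw [hspec]
    have h : star U * (U * diagonal lam * star U) * U
        = (star U * U) * diagonal lam * (star U * U) := by
      simp only [Matrix.mul_assoc]
    rw [h, hU1, Matrix.one_mul, Matrix.mul_one]
  have conjMul : ∀ X Y : Matrix (Fin n) (Fin n) ℝ,
      star U * (X * Y) * U = (star U * X * U) * (star U * Y * U) := by
    intro X Y
    have h : U * (star U * (Y * U)) = Y * U := by
      rw [← Matrix.mul_assoc, hU2, Matrix.one_mul]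
    simp only [Matrix.mul_assoc, h]
  have key : ∀ m, star U * B m * U = diagonal (fun i => sbAux (q : ℝ) (lam i) m) := by
    intro m
    induction m using Nat.strong_induction_on with
    | _ m ih =>
      match m with
      | 0 =>
        rw [hB0, Matrix.mul_one, hU1]
        ext i j
        by_cases h : i = j <;> simp [h, sbAux, Matrix.one_apply, Matrix.diagonal_apply]
      | 1 =>
        rw [hB1, conjA]
        rfl
      | 2 =>
        rw [hB2, pow_two]
        rw [Matrix.mul_sub, Matrix.sub_mul, conjMul, conjA]
        rw [Matrix.mul_smul, Matrix.smul_mul, Matrix.mul_one, hU1]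
        rw [Matrix.diagonal_mul_diagonal, Matrix.smul_one_eq_diagonal]
        ext i j
        rcases eq_or_ne i j with rfl | h
        · simp only [Matrix.sub_apply, Matrix.diagonal_apply_eq, sbAux]
          ring
        · simp [Matrix.sub_apply, Matrix.diagonal_apply_ne _ h]
      | (k + 3) =>
        rw [hBrec (k + 3) (by omega)]
        have e1 : k + 3 - 1 = k + 2 := rfl
        have e2 : k + 3 - 2 = k + 1 := rfl
        rw [e1, e2]
        rw [Matrix.mul_sub, Matrix.sub_mul, conjMul, conjA,
          Matrix.mul_smul, Matrix.smul_mul, ih (k + 2) (by omega), ih (k + 1) (by omega)]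
        rw [Matrix.diagonal_mul_diagonal]
        ext i j
        rcases eq_or_ne i j with rfl | h
        · simp only [Matrix.sub_apply, Matrix.smul_apply, Matrix.diagonal_apply_eq,
            smul_eq_mul, sbAux]
          ring
        · simp [Matrix.sub_apply, Matrix.diagonal_apply_ne _ h]
  have htr : ∀ m, (B m).trace = ∑ i, sbAux (q : ℝ) (lam i) m := by
    intro m
    have h1 : (star U * B m * U).trace = (B m).trace := by
      rw [Matrix.trace_mul_comm, ← Matrix.mul_assoc, hU2, Matrix.one_mul]
    rw [← h1, key m, Matrix.trace_diagonal]
  intro m hm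
  rw [hN m]
  rw [Matrix.trace_sub, Matrix.trace_smul, Matrix.trace_sum]
  simp only [htr, smul_eq_mul]
  simp only [Finset.mul_sum]
  rw [Finset.sum_comm, ← Finset.sum_sub_distrib]
  simp only [← Finset.mul_sum]
  have hq1 : (1 : ℝ) ≤ (q : ℝ) := by exact_mod_cast hq
  calc ∑ i, (sbAux (q:ℝ) (lam i) m - (q - 1 : ℝ) * ∑ k ∈ Finset.Icc 1 ((m-1)/2),
        sbAux (q:ℝ) (lam i) (m - 2 * k))
      = ∑ i, (2 * (Real.sqrt q) ^ m *
          (Chebyshev.T ℝ (m : ℤ)).eval (lam i / (2 * Real.sqrt q))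
          + (if Even m then (1:ℝ) else 0) * ((q:ℝ) - 1)) := by
        refine Finset.sum_congr rfl fun i _ => ?_
        exact sbAux_key' (q : ℝ) (lam i) hq1 m hm
    _ = _ := by
        rw [Finset.sum_add_distrib, Finset.sum_const, ← Finset.mul_sum]
        simp [Finset.card_univ, mul_comm, mul_assoc]
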